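/- Define r_n(a,b) as the probability that a uniform path in Cat(n) passes through the three points (a,b-1), (a,b), (a,b+1), and p_n(a,b) as the probability it passes through (a,b). Then r_n(a,b) = p_n(a,b) · (n-b)(b-a)(b-a+2)(b+1) / ((2n-a-b)(b-a+1)²(a+b)) whenever all factors are defined and nonzero (0 < a < b < n, a+b > 0). -/

import Mathlib

open Finset
/-- The ballot number `f(a,b) = C(a+b,a) - C(a+b,a-1)`, with the convention
`C(m,-1) = 0` (case `a = 0`). -/
def ballotZ (a b : ℕ) : ℤ :=
  (a + b).choose a - (if a = 0 then 0 else (a + b).choose (a - 1))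

/-- The ballot number `f(a,b) = C(a+b,a) - C(a+b,a-1)` as a natural number,
with the convention `C(m,-1) = 0` (case `a = 0`). -/
def ballotN (a b : ℕ) : ℕ :=
  (a + b).choose a - (if a = 0 then 0 else (a + b).choose (a - 1))

/-- The Catalan number `Cat(n) = C(2n,n)/(n+1)`. -/
def CatN (n : ℕ) : ℕ := (2 * n).choose n / (n + 1)

/-- `p_n(a,b) = f(a,b)·f(n-b,n-a)/Cat(n)`: the probability that a uniform path in
`Cat(n)` passes through `(a,b)`. -/
def pQ (n a b : ℕ) : ℚ := ((ballotN a b * ballotN (n - b) (n - a) : ℕ) : ℚ) / (CatN n : ℚ)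

/-- `r_n(a,b) = f(a,b-1)·f(n-b-1,n-a)/Cat(n)`: the probability that a uniform path in
`Cat(n)` passes through `(a,b-1)`, `(a,b)` and `(a,b+1)`. -/
def rQ (n a b : ℕ) : ℚ :=
  ((ballotN a (b - 1) * ballotN (n - b - 1) (n - a) : ℕ) : ℚ) / (CatN n : ℚ)

lemma key_nat (x y : ℕ) (hx : 0 < x) (h : x ≤ y) :
    (x + y).choose (x - 1) * (y + 1) = (x + y).choose x * x := by
  have h1 := Nat.choose_succ_right_eq (x + y) (x - 1)
  have h2 : x - 1 + 1 = x := by omega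
  have h3 : x + y - (x - 1) = y + 1 := by omega
  rw [h2, h3] at h1
  omega

lemma ballotN_eq (x y : ℕ) (h : x ≤ y) :
    (ballotN x y : ℚ) = ((x + y).choose x : ℚ) * ((y : ℚ) - x + 1) / ((y : ℚ) + 1) := by
  have hy1 : ((y : ℚ) + 1) ≠ 0 := by positivity
  rcases Nat.eq_zero_or_pos x with hx | hx
  · subst hx; simp [ballotN]; field_simp
  · have key := key_nat x y hx h
    have hle : (x + y).choose (x - 1) ≤ (x + y).choose x := by
      nlinarith [Nat.choose_pos (show x ≤ x + y by omega)]
    have hb : ballotN x y = (x + y).choose x - (x + y).choose (x - 1) := by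
      simp [ballotN, hx.ne']
    rw [hb, Nat.cast_sub hle]
    have keyQ : ((x + y).choose (x - 1) : ℚ) * ((y : ℚ) + 1)
        = ((x + y).choose x : ℚ) * (x : ℚ) := by exact_mod_cast key
    field_simp
    linear_combination -keyQ

lemma succ_row (x y : ℕ) (hx : 0 < x) (hy : 0 < y) :
    (x + y) * (x + y - 1).choose (x - 1) = (x + y).choose x * x := by
  have h := Nat.add_one_mul_choose_eq (x + y - 1) (x - 1)
  have h1 : x + y - 1 + 1 = x + y := by omega
  have h2 : x - 1 + 1 = x := by omega
  rw [h1, h2] at h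
  simpa [Nat.succ_eq_add_one] using h

lemma drop_row (x y : ℕ) (hx : 0 < y) (h : x ≤ y) :
    y * (x + y).choose x = (x + y) * (x + y - 1).choose x := by
  have hk : x ≤ x + y - 1 := by omega
  have h1 := Nat.add_one_mul_choose_eq (x + y - 1) (x + y - 1 - x)
  rw [Nat.choose_symm hk] at h1
  have h2 : x + y - 1 + 1 = x + y := by omega
  have h3 : x + y - 1 - x + 1 = y := by omega
  rw [h2, h3] at h1
  have h5 : (x + y).choose y = (x + y).choose x := by
    have hs := Nat.choose_symm (show x ≤ x + y by omega)
    rwa [show x + y - x = y by omega] at hs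
  rw [h5] at h1
  rw [mul_comm]
  exact h1.symm

lemma catN_pos (n : ℕ) : 0 < CatN n := by
  have h : CatN n = catalan n := by
    rw [catalan_eq_centralBinom_div, Nat.centralBinom, CatN]
  rw [h]
  have := Nat.centralBinom_pos n
  have h2 := succ_mul_catalan_eq_centralBinom n
  rcases Nat.eq_zero_or_pos (catalan n) with hc | hc
  · rw [hc] at h2; omega
  · exact hc


/-- `r_n(a,b) = p_n(a,b)·(n-b)(b-a)(b-a+2)(b+1)/((2n-a-b)(b-a+1)²(a+b))` for `0 < a < b < n`. -/
theorem stmt12 (n a b : ℕ) (h1 : 0 < a) (h2 : a < b) (h3 : b < n) :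
    rQ n a b = pQ n a b *
      (((n : ℚ) - b) * ((b : ℚ) - a) * ((b : ℚ) - a + 2) * ((b : ℚ) + 1)) /
      ((2 * (n : ℚ) - a - b) * ((b : ℚ) - a + 1) ^ 2 * ((a : ℚ) + b)) := by
  have hb1 : 1 ≤ b := by omega
  -- cast facts
  have kb : ((b - 1 : ℕ) : ℚ) = (b : ℚ) - 1 := by rw [Nat.cast_sub hb1]; norm_num
  have knb : ((n - b : ℕ) : ℚ) = (n : ℚ) - b := by rw [Nat.cast_sub (by omega)]
  have kna : ((n - a : ℕ) : ℚ) = (n : ℚ) - a := by rw [Nat.cast_sub (by omega)]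
  -- ballot formulas
  have e1 := ballotN_eq a b h2.le
  have e2 := ballotN_eq a (b - 1) (by omega)
  have e3 := ballotN_eq (n - b) (n - a) (by omega)
  have e4 := ballotN_eq (n - b - 1) (n - a) (by omega)
  rw [show a + (b - 1) = a + b - 1 by omega, kb] at e2
  rw [show (n - b) + (n - a) = 2 * n - a - b by omega, knb, kna] at e3
  rw [show (n - b - 1) + (n - a) = 2 * n - a - b - 1 by omega, kna,
    show ((n - b - 1 : ℕ) : ℚ) = (n : ℚ) - b - 1 by rw [Nat.cast_sub (by omega), knb]; norm_num] at e4
  -- choose-row relations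
  have c1 : (b : ℚ) * ((a + b).choose a : ℚ) = ((a : ℚ) + b) * ((a + b - 1).choose a : ℚ) := by
    have h := drop_row a b (by omega) h2.le
    have : ((b * (a + b).choose a : ℕ) : ℚ) = (((a + b) * (a + b - 1).choose a : ℕ) : ℚ) := by
      exact_mod_cast h
    push_cast at this
    linarith
  have c2 : (2 * (n : ℚ) - a - b) * ((2 * n - a - b - 1).choose (n - b - 1) : ℚ)
      = ((2 * n - a - b).choose (n - b) : ℚ) * ((n : ℚ) - b) := by
    have h := succ_row (n - b) (n - a) (by omega) (by omega)
    rw [show (n - b) + (n - a) = 2 * n - a - b by omega] at h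
    have hq : (((2 * n - a - b) * (2 * n - a - b - 1).choose (n - b - 1) : ℕ) : ℚ)
        = (((2 * n - a - b).choose (n - b) * (n - b) : ℕ) : ℚ) := by exact_mod_cast h
    push_cast at hq
    rw [show ((2 * n - a - b : ℕ) : ℚ) = 2 * (n : ℚ) - a - b by
      rw [Nat.cast_sub (by omega), Nat.cast_sub (by omega)]; push_cast; ring, knb] at hq
    linarith
  -- nonzero facts
  have ha1 : (1 : ℚ) ≤ (a : ℚ) := by exact_mod_cast h1
  have hab : (a : ℚ) < b := by exact_mod_cast h2
  have hbn : (b : ℚ) < n := by exact_mod_cast h3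
  have hB : (b : ℚ) ≠ 0 := by positivity
  have hB1 : (b : ℚ) + 1 ≠ 0 := by positivity
  have hAB : (a : ℚ) + b ≠ 0 := by positivity
  have hS : 2 * (n : ℚ) - a - b ≠ 0 := ne_of_gt (by linarith)
  have hNA : (n : ℚ) - a + 1 ≠ 0 := ne_of_gt (by linarith)
  have hBA : (b : ℚ) - a + 1 ≠ 0 := ne_of_gt (by linarith)
  have hK : ((CatN n : ℕ) : ℚ) ≠ 0 := by
    exact_mod_cast (Nat.cast_pos (α := ℚ)).mpr (catN_pos n) |>.ne'
  have hC0 : ((a + b - 1).choose a : ℚ)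
      = (b : ℚ) * ((a + b).choose a : ℚ) / ((a : ℚ) + b) := by
    field_simp
    linear_combination -c1
  have hD0 : ((2 * n - a - b - 1).choose (n - b - 1) : ℚ)
      = ((2 * n - a - b).choose (n - b) : ℚ) * ((n : ℚ) - b) / (2 * (n : ℚ) - a - b) := by
    rw [eq_div_iff hS]
    linear_combination c2
  unfold rQ pQ
  rw [Nat.cast_mul, Nat.cast_mul, e1, e2, e3, e4, hC0, hD0]
  simp only [sub_add_cancel]
  field_simp
  ring
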